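/- arXiv:1412.0187 — 3 statements merged into one kernel-verified Lean document; each statement's English description precedes it below -/
import Mathlib

section
/- Let G be a finite simple graph and T a spanning tree of G. Suppose a 1-chain i on G decomposes as i = z + t, where z is a circulation on G (a sum of mesh currents, i.e. of boundaries of faces) and t is a 1-chain supported on T (the node-pair currents). If i itself is a circulation, i.e. i satisfies Kirchhoff's current law (zero divergence) at every vertex, then t = 0, so i = z. -/
open Finset

/-- A 1-chain on a simple graph `G`: antisymmetric and vanishing on non-adjacent pairs. -/
def IsOneChain {V : Type*} (G : SimpleGraph V) (f : V → V → ℝ) : Prop :=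
  (∀ x y, f x y = -(f y x)) ∧ (∀ x y, ¬ G.Adj x y → f x y = 0)

/-- A circulation: a 1-chain with zero divergence at every vertex. -/
def IsCirculation {V : Type*} [Fintype V] (G : SimpleGraph V) (f : V → V → ℝ) : Prop :=
  IsOneChain G f ∧ ∀ x, ∑ y, f x y = 0

/-- `T` is a spanning tree of `G`: a subgraph on the same vertex set,
connected and without cycles. -/
def IsSpanningTree {V : Type*} (G T : SimpleGraph V) : Prop :=
  T ≤ G ∧ T.Connected ∧ T.IsAcyclic

/-- A 1-chain is supported on `T` if it vanishes whenever `{x, y}` is not an edge of `T`. -/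
def SupportedOn {V : Type*} (T : SimpleGraph V) (f : V → V → ℝ) : Prop :=
  ∀ x y, ¬ T.Adj x y → f x y = 0

theorem node_pair_currents_vanish_of_kirchhoff
    {V : Type*} [Fintype V] (G T : SimpleGraph V)
    (hT : IsSpanningTree G T)
    (i z t : V → V → ℝ)
    (hi : IsOneChain G i)
    (hz : IsCirculation G z)
    (ht : IsOneChain G t) (htsupp : SupportedOn T t)
    (hdecomp : i = z + t)
    (hKirchhoff : ∀ x, ∑ y, i x y = 0) :
    t = 0 ∧ i = z := by
  classical
  -- t has zero divergence everywhere
  have hdiv : ∀ v, ∑ w, t v w = 0 := by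
    intro v
    have : ∑ w, i v w = ∑ w, z v w + ∑ w, t v w := by
      rw [← Finset.sum_add_distrib]
      simp [hdecomp]
    rw [hKirchhoff v, hz.2 v] at this
    linarith
  -- every value of t on a tree edge vanishes
  have key : ∀ x y, T.Adj x y → t x y = 0 := by
    intro x y hxy
    have hbridge := (SimpleGraph.isAcyclic_iff_forall_adj_isBridge.mp hT.2.2) hxy
    rw [SimpleGraph.isBridge_iff] at hbridge
    set T' := T \ SimpleGraph.fromEdgeSet {s(x, y)} with hT'
    set S : Finset V := Finset.univ.filter (fun v => T'.Reachable x v) with hS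
    have hxS : x ∈ S := Finset.mem_filter.mpr ⟨Finset.mem_univ x, SimpleGraph.Reachable.refl x⟩
    have hyS : y ∉ S := by
      simp only [hS, Finset.mem_filter, Finset.mem_univ, true_and]
      exact hbridge
    -- antisymmetric double sum over S vanishes
    have hanti : ∑ v ∈ S, ∑ w ∈ S, t v w = 0 := by
      have h2 : ∑ v ∈ S, ∑ w ∈ S, t v w = -∑ v ∈ S, ∑ w ∈ S, t w v := by
        rw [← Finset.sum_neg_distrib]
        refine Finset.sum_congr rfl fun v _ => ?_
        rw [← Finset.sum_neg_distrib]
        exact Finset.sum_congr rfl fun w _ => ht.1 v w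
      have h3 : ∑ v ∈ S, ∑ w ∈ S, t w v = ∑ v ∈ S, ∑ w ∈ S, t v w := Finset.sum_comm
      linarith [h2, h3]
    -- total sum over v ∈ S of divergence is 0
    have htot : ∑ v ∈ S, ∑ w, t v w = 0 := by
      apply Finset.sum_eq_zero
      intro v _
      exact hdiv v
    -- split the inner sum
    have hsplit : ∀ v, ∑ w, t v w = ∑ w ∈ S, t v w + ∑ w ∈ Sᶜ, t v w := by
      intro v
      rw [Finset.sum_add_sum_compl]
    have hcross : ∑ v ∈ S, ∑ w ∈ Sᶜ, t v w = 0 := by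
      calc ∑ v ∈ S, ∑ w ∈ Sᶜ, t v w
          = ∑ v ∈ S, (∑ w, t v w - ∑ w ∈ S, t v w) := by
            apply Finset.sum_congr rfl; intro v _
            rw [hsplit v]; ring
        _ = ∑ v ∈ S, ∑ w, t v w - ∑ v ∈ S, ∑ w ∈ S, t v w := Finset.sum_sub_distrib _ _
        _ = 0 := by rw [htot, hanti]; ring
    -- each cross term other than (x, y) vanishes
    have hterm : ∀ v ∈ S, ∀ w ∈ Sᶜ, (v, w) ≠ (x, y) → t v w = 0 := by
      intro v hv w hw hne
      by_cases hadj : T.Adj v w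
      · by_cases he : s(v, w) = s(x, y)
        · rcases Sym2.eq_iff.mp he with ⟨rfl, rfl⟩ | ⟨rfl, rfl⟩
          · exact absurd rfl hne
          · exact absurd hv hyS
        · -- then T'.Adj v w, so w reachable from x, contradiction
          have hadj' : T'.Adj v w := by
            simp only [hT', SimpleGraph.sdiff_adj, SimpleGraph.fromEdgeSet_adj]
            exact ⟨hadj, fun h => he h.1⟩
          have hv' : T'.Reachable x v := by
            simpa [hS] using hv
          have hw' : T'.Reachable x w := hv'.trans hadj'.reachable
          exact absurd (by simp [hS, hw'] : w ∈ S) (Finset.mem_compl.mp hw)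
      · exact htsupp v w hadj
    have : ∑ v ∈ S, ∑ w ∈ Sᶜ, t v w = t x y := by
      rw [Finset.sum_eq_single x]
      · rw [Finset.sum_eq_single y]
        · intro w hw hne
          exact hterm x hxS w hw (by simp [hne])
        · intro hy
          exact absurd (Finset.mem_compl.mpr hyS) hy
      · intro v hv hne
        apply Finset.sum_eq_zero
        intro w hw
        exact hterm v hv w hw (by simp [hne])
      · intro hx
        exact absurd hxS hx
    rw [this] at hcross
    exact hcross
  have ht0 : t = 0 := by
    funext v w
    by_cases h : T.Adj v w
    · exact key v w h
    · exact htsupp v w h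
  refine ⟨ht0, ?_⟩
  rw [hdecomp, ht0, add_zero]
end

section
/- Let G be a finite simple graph with B edges, N vertices, and R connected components. The circulations on G form a real vector subspace of the space of 1-chains whose dimension equals M = B - N + R (the number of independent meshes). -/
open Finset



namespace CircAux

variable {V : Type*} [Fintype V] [DecidableEq V] [LinearOrder V]
  (G : SimpleGraph V) [DecidableRel G.Adj]

abbrev OEdge := {e : V × V // G.Adj e.1 e.2 ∧ e.1 < e.2}

/-- linear map from edge coordinates to 1-chains -/
noncomputable def toChain : (OEdge G → ℝ) →ₗ[ℝ] (V → V → ℝ) where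
  toFun g x y :=
    if h : G.Adj x y ∧ x < y then g ⟨(x, y), h⟩
    else if h' : G.Adj y x ∧ y < x then -g ⟨(y, x), h'⟩ else 0
  map_add' g h := by
    funext x y
    simp only [Pi.add_apply]
    split_ifs <;> ring
  map_smul' c g := by
    funext x y
    simp only [Pi.smul_apply, smul_eq_mul, RingHom.id_apply]
    split_ifs <;> ring

lemma toChain_apply_edge (g : OEdge G → ℝ) (e : OEdge G) :
    toChain G g e.1.1 e.1.2 = g e := by
  simp only [toChain, LinearMap.coe_mk, AddHom.coe_mk]
  rw [dif_pos e.2]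

lemma toChain_not_adj (g : OEdge G → ℝ) (x y : V) (h : ¬ G.Adj x y) :
    toChain G g x y = 0 := by
  simp only [toChain, LinearMap.coe_mk, AddHom.coe_mk]
  rw [dif_neg (by rintro ⟨h', -⟩; exact h h'),
    dif_neg (by rintro ⟨h', -⟩; exact h (G.adj_symm h'))]

lemma toChain_antisymm (g : OEdge G → ℝ) (x y : V) :
    toChain G g x y = -(toChain G g y x) := by
  simp only [toChain, LinearMap.coe_mk, AddHom.coe_mk]
  split_ifs with h1 h2 h2
  · exact absurd h2.2 (lt_asymm h1.2)
  · rw [neg_neg]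
  · rfl
  · rw [neg_zero]

lemma toChain_restrict (f : V → V → ℝ) (h1 : ∀ x y, f x y = -(f y x))
    (h2 : ∀ x y, ¬ G.Adj x y → f x y = 0) :
    toChain G (fun e => f e.1.1 e.1.2) = f := by
  funext x y
  simp only [toChain, LinearMap.coe_mk, AddHom.coe_mk]
  split_ifs with h h'
  · rfl
  · rw [h1 x y]
  · by_cases ha : G.Adj x y
    · exfalso
      rcases lt_trichotomy x y with hl | hl | hl
      · exact h ⟨ha, hl⟩
      · exact ha.ne hl
      · exact h' ⟨G.adj_symm ha, hl⟩

    · rw [h2 x y ha]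

lemma toChain_injective : Function.Injective (toChain G) := by
  intro g h hgh
  funext e
  rw [← toChain_apply_edge G g e, ← toChain_apply_edge G h e, hgh]

/-- divergence -/
noncomputable def divMap : (V → V → ℝ) →ₗ[ℝ] (V → ℝ) where
  toFun f x := ∑ y, f x y
  map_add' f g := by funext x; simp [Finset.sum_add_distrib]
  map_smul' c f := by funext x; simp [Finset.mul_sum]

/-- oriented incidence matrix -/
def incM : Matrix V (OEdge G) ℝ :=
  fun x e => if x = e.1.1 then 1 else if x = e.1.2 then -1 else 0

lemma key1 (x : V) (F : V → ℝ) :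
    ∑ e : OEdge G, (if x = e.1.1 then F e.1.2 else 0) =
      ∑ y, if G.Adj x y ∧ x < y then F y else 0 := by
  rw [← Finset.sum_subtype
    (Finset.univ.filter (fun p : V × V => G.Adj p.1 p.2 ∧ p.1 < p.2))
    (fun p => by simp) (fun p : V × V => if x = p.1 then F p.2 else 0)]
  rw [Finset.sum_filter, Fintype.sum_prod_type]
  have : ∀ a b : V, (if G.Adj a b ∧ a < b then if x = a then F b else 0 else 0)
      = if x = a then (if G.Adj a b ∧ a < b then F b else 0) else 0 := by
    intro a b; split_ifs <;> rfl
  simp_rw [this]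
  have pull : ∀ a : V, (∑ b, if x = a then (if G.Adj a b ∧ a < b then F b else 0) else 0)
      = if x = a then (∑ b, if G.Adj a b ∧ a < b then F b else 0) else 0 := by
    intro a; split_ifs <;> simp
  simp_rw [pull]
  simp

lemma key2 (x : V) (F : V → ℝ) :
    ∑ e : OEdge G, (if x = e.1.2 then F e.1.1 else 0) =
      ∑ y, if G.Adj y x ∧ y < x then F y else 0 := by
  rw [← Finset.sum_subtype
    (Finset.univ.filter (fun p : V × V => G.Adj p.1 p.2 ∧ p.1 < p.2))
    (fun p => by simp) (fun p : V × V => if x = p.2 then F p.1 else 0)]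
  rw [Finset.sum_filter, Fintype.sum_prod_type_right]
  have : ∀ a b : V, (if G.Adj a b ∧ a < b then if x = b then F a else 0 else 0)
      = if x = b then (if G.Adj a b ∧ a < b then F a else 0) else 0 := by
    intro a b; split_ifs <;> rfl
  simp_rw [this]
  have pull : ∀ b : V, (∑ a, if x = b then (if G.Adj a b ∧ a < b then F a else 0) else 0)
      = if x = b then (∑ a, if G.Adj a b ∧ a < b then F a else 0) else 0 := by
    intro b; split_ifs <;> simp
  simp_rw [pull]
  simp

lemma div_toChain : divMap ∘ₗ toChain G = (incM G).mulVecLin := by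
  apply LinearMap.ext
  intro g
  funext x
  simp only [LinearMap.comp_apply, divMap, LinearMap.coe_mk, AddHom.coe_mk,
    Matrix.mulVecLin_apply, Matrix.mulVec, dotProduct, incM]
  have hsplit : ∀ e : OEdge G,
      (if x = e.1.1 then (1:ℝ) else if x = e.1.2 then -1 else 0) * g e
        = (if x = e.1.1 then g e else 0) + (if x = e.1.2 then -(g e) else 0) := by
    intro e
    have hne : e.1.1 ≠ e.1.2 := ne_of_lt e.2.2
    split_ifs with h1 h2 <;> simp_all <;> ring
  rw [Finset.sum_congr rfl (fun e _ => hsplit e), Finset.sum_add_distrib]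
  have e1 : ∑ e : OEdge G, (if x = e.1.1 then g e else 0)
      = ∑ e : OEdge G, (if x = e.1.1 then toChain G g e.1.1 e.1.2 else 0) := by
    apply Finset.sum_congr rfl; intro e _; rw [toChain_apply_edge]
  have e2 : ∑ e : OEdge G, (if x = e.1.2 then -(g e) else 0)
      = ∑ e : OEdge G, (if x = e.1.2 then toChain G g e.1.2 e.1.1 else 0) := by
    apply Finset.sum_congr rfl; intro e _
    rw [toChain_antisymm, toChain_apply_edge]
  rw [e1, e2]
  have k1 := key1 G x (fun y => toChain G g x y)
  have k2 := key2 G x (fun y => toChain G g x y)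
  have c1 : ∑ e : OEdge G, (if x = e.1.1 then toChain G g e.1.1 e.1.2 else 0)
      = ∑ e : OEdge G, (if x = e.1.1 then toChain G g x e.1.2 else 0) := by
    apply Finset.sum_congr rfl; intro e _; split_ifs with h; rw [h]; rfl
  have c2 : ∑ e : OEdge G, (if x = e.1.2 then toChain G g e.1.2 e.1.1 else 0)
      = ∑ e : OEdge G, (if x = e.1.2 then toChain G g x e.1.1 else 0) := by
    apply Finset.sum_congr rfl; intro e _; split_ifs with h; rw [h]; rfl
  rw [c1, c2, k1, k2, ← Finset.sum_add_distrib]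
  apply Finset.sum_congr rfl
  intro y _
  by_cases ha : G.Adj x y
  · have hne : x ≠ y := ha.ne
    rcases hne.lt_or_gt with h | h
    · rw [if_pos ⟨ha, h⟩, if_neg (by rintro ⟨-, h'⟩; exact absurd h' h.asymm)]; ring
    · rw [if_neg (by rintro ⟨-, h'⟩; exact absurd h' h.asymm), if_pos ⟨G.adj_symm ha, h⟩]; ring
  · rw [if_neg (by rintro ⟨h', -⟩; exact ha h'), if_neg (by rintro ⟨h', -⟩; exact ha (G.adj_symm h')),
      toChain_not_adj G g x y ha]
    ring

end CircAux

namespace CircAux2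
open CircAux Matrix
variable {V : Type*} [Fintype V] [DecidableEq V] [LinearOrder V]
  (G : SimpleGraph V) [DecidableRel G.Adj]

lemma incM_mul_transpose : incM G * (incM G)ᵀ = G.lapMatrix ℝ := by
  ext x y
  simp only [Matrix.mul_apply, Matrix.transpose_apply, SimpleGraph.lapMatrix,
    Matrix.sub_apply, SimpleGraph.degMatrix, SimpleGraph.adjMatrix, Matrix.of_apply]
  by_cases hxy : x = y
  · subst hxy
    have hpt : ∀ e : OEdge G, incM G x e * incM G x e
        = (if x = e.1.1 then (1:ℝ) else 0) + (if x = e.1.2 then 1 else 0) := by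
      intro e
      have hne : e.1.1 ≠ e.1.2 := ne_of_lt e.2.2
      simp only [incM]
      split_ifs <;> simp_all <;> ring
    rw [Finset.sum_congr rfl (fun e _ => hpt e), Finset.sum_add_distrib,
      key1 G x (fun _ => 1), key2 G x (fun _ => 1), ← Finset.sum_add_distrib]
    have : ∀ z, ((if G.Adj x z ∧ x < z then (1:ℝ) else 0)
        + (if G.Adj z x ∧ z < x then 1 else 0)) = if G.Adj x z then 1 else 0 := by
      intro z
      by_cases ha : G.Adj x z
      · rcases ha.ne.lt_or_gt with h | h
        · rw [if_pos ⟨ha, h⟩, if_neg (by rintro ⟨-, h'⟩; exact absurd h' h.asymm),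
            if_pos ha]; ring
        · rw [if_neg (by rintro ⟨-, h'⟩; exact absurd h' h.asymm), if_pos ⟨G.adj_symm ha, h⟩,
            if_pos ha]; ring
      · rw [if_neg (by rintro ⟨h', -⟩; exact ha h'),
          if_neg (by rintro ⟨h', -⟩; exact ha (G.adj_symm h')), if_neg ha]; ring
    rw [Finset.sum_congr rfl (fun z _ => this z)]
    have : ∑ z, (if G.Adj x z then (1:ℝ) else 0) = G.degree x := by
      rw [Finset.sum_boole]
      rw [SimpleGraph.degree, SimpleGraph.neighborFinset_eq_filter]
    rw [this]
    simp [Matrix.diagonal_apply_eq]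
  · have hpt : ∀ e : OEdge G, incM G x e * incM G y e
        = (if x = e.1.1 then (if y = e.1.2 then (-1:ℝ) else 0) else 0)
          + (if x = e.1.2 then (if y = e.1.1 then -1 else 0) else 0) := by
      intro e
      have hne : e.1.1 ≠ e.1.2 := ne_of_lt e.2.2
      simp only [incM]
      split_ifs <;> simp_all <;> ring
    rw [Finset.sum_congr rfl (fun e _ => hpt e), Finset.sum_add_distrib,
      key1 G x (fun z => if y = z then (-1:ℝ) else 0),
      key2 G x (fun z => if y = z then (-1:ℝ) else 0)]
    have comm1 : ∀ z, (if G.Adj x z ∧ x < z then (if y = z then (-1:ℝ) else 0) else 0)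
        = if y = z then (if G.Adj x z ∧ x < z then -1 else 0) else 0 := by
      intro z; split_ifs <;> rfl
    have comm2 : ∀ z, (if G.Adj z x ∧ z < x then (if y = z then (-1:ℝ) else 0) else 0)
        = if y = z then (if G.Adj z x ∧ z < x then -1 else 0) else 0 := by
      intro z; split_ifs <;> rfl
    simp_rw [comm1, comm2, Finset.sum_ite_eq, Finset.mem_univ, if_true]
    rw [Matrix.diagonal_apply_ne _ hxy]
    by_cases ha : G.Adj x y
    · rcases ha.ne.lt_or_gt with h | h
      · rw [if_pos ⟨ha, h⟩, if_neg (by rintro ⟨-, h'⟩; exact absurd h' h.asymm),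
          if_pos ha]; ring
      · rw [if_neg (by rintro ⟨-, h'⟩; exact absurd h' h.asymm), if_pos ⟨G.adj_symm ha, h⟩,
          if_pos ha]; ring
    · rw [if_neg (by rintro ⟨h', -⟩; exact ha h'),
        if_neg (by rintro ⟨h', -⟩; exact ha (G.adj_symm h')), if_neg ha]; ring

lemma card_OEdge : Fintype.card (OEdge G) = G.edgeFinset.card := by
  rw [SimpleGraph.edgeFinset, Set.toFinset_card]
  apply Fintype.card_of_bijective
    (f := fun e : OEdge G => (⟨s(e.1.1, e.1.2), e.2.1⟩ : G.edgeSet))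
  constructor
  · rintro ⟨⟨a, b⟩, ha, hab⟩ ⟨⟨c, d⟩, hc, hcd⟩ h
    have h := congrArg Subtype.val h
    simp only [Sym2.eq_iff] at h
    rcases h with ⟨rfl, rfl⟩ | ⟨rfl, rfl⟩
    · rfl
    · exact absurd (hab.trans hcd) (lt_irrefl _)
  · rintro ⟨e, he⟩
    revert he
    refine Sym2.ind (fun a b he => ?_) e
    have hadj : G.Adj a b := (SimpleGraph.mem_edgeSet G).mp he
    rcases hadj.ne.lt_or_gt with h | h
    · exact ⟨⟨(a, b), hadj, h⟩, rfl⟩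
    · exact ⟨⟨(b, a), hadj.symm, h⟩, Subtype.ext (Sym2.eq_swap)⟩

end CircAux2

/-- The circulations on `G` (antisymmetric functions vanishing on non-adjacent pairs and
with zero divergence at every vertex) form a real vector subspace of the space of
1-chains `V → V → ℝ`. -/
def circulationSubmodule (V : Type*) [Fintype V] (G : SimpleGraph V) :
    Submodule ℝ (V → V → ℝ) where
  carrier := {f | (∀ x y, f x y = -(f y x)) ∧ (∀ x y, ¬ G.Adj x y → f x y = 0) ∧
      (∀ x, ∑ y, f x y = 0)}
  add_mem' := by
    rintro a b ⟨ha1, ha2, ha3⟩ ⟨hb1, hb2, hb3⟩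
    refine ⟨fun x y => ?_, fun x y h => ?_, fun x => ?_⟩
    · simp only [Pi.add_apply]
      rw [ha1 x y, hb1 x y]; ring
    · simp only [Pi.add_apply]
      rw [ha2 x y h, hb2 x y h]; ring
    · simp only [Pi.add_apply]
      rw [Finset.sum_add_distrib, ha3 x, hb3 x]; ring
  zero_mem' := ⟨fun x y => by simp, fun x y _ => rfl, fun x => by simp⟩
  smul_mem' := by
    rintro c a ⟨ha1, ha2, ha3⟩
    refine ⟨fun x y => ?_, fun x y h => ?_, fun x => ?_⟩
    · simp only [Pi.smul_apply, smul_eq_mul]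
      rw [ha1 x y]; ring
    · simp only [Pi.smul_apply, smul_eq_mul]
      rw [ha2 x y h]; ring
    · simp only [Pi.smul_apply, smul_eq_mul]
      rw [← Finset.mul_sum, ha3 x]; ring

/-- The dimension of the space of circulations equals `M = B - N + R`, where `B` is the
number of edges, `N` the number of vertices and `R` the number of connected components. -/
theorem finrank_circulationSubmodule
    (V : Type*) [Fintype V] [DecidableEq V]
    (G : SimpleGraph V) [DecidableRel G.Adj] :
    (Module.finrank ℝ (circulationSubmodule V G) : ℤ) =
      (G.edgeFinset.card : ℤ) - (Fintype.card V : ℤ) + (Nat.card G.ConnectedComponent : ℤ) := by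
  classical
  letI : LinearOrder V := LinearOrder.lift' (Fintype.equivFin V) (Fintype.equivFin V).injective
  set d := CircAux.divMap ∘ₗ CircAux.toChain G with hd
  have hmem : ∀ f : V → V → ℝ, f ∈ circulationSubmodule V G ↔
      ((∀ x y, f x y = -(f y x)) ∧ (∀ x y, ¬ G.Adj x y → f x y = 0) ∧
        (∀ x, ∑ y, f x y = 0)) := fun f => Iff.rfl
  have hker : circulationSubmodule V G =
      Submodule.map (CircAux.toChain G) (LinearMap.ker d) := by
    ext f
    rw [hmem, Submodule.mem_map]
    constructor
    · rintro ⟨h1, h2, h3⟩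
      have hres : CircAux.toChain G (fun e => f e.1.1 e.1.2) = f :=
        CircAux.toChain_restrict G f h1 h2
      refine ⟨fun e => f e.1.1 e.1.2, ?_, hres⟩
      rw [LinearMap.mem_ker, hd, LinearMap.comp_apply, hres]
      funext x
      exact h3 x
    · rintro ⟨g, hg, rfl⟩
      refine ⟨CircAux.toChain_antisymm G g, CircAux.toChain_not_adj G g, fun x => ?_⟩
      rw [LinearMap.mem_ker, hd, LinearMap.comp_apply] at hg
      exact congrFun hg x
  have hdim1 : Module.finrank ℝ (circulationSubmodule V G)
      = Module.finrank ℝ (LinearMap.ker d) := by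
    rw [hker]
    exact (LinearEquiv.finrank_eq
      (Submodule.equivMapOfInjective _ (CircAux.toChain_injective G) _)).symm
  have hrn : Module.finrank ℝ (LinearMap.range d) + Module.finrank ℝ (LinearMap.ker d)
      = Fintype.card (CircAux.OEdge G) := by
    rw [LinearMap.finrank_range_add_finrank_ker d, Module.finrank_pi]
  have hrank : Module.finrank ℝ (LinearMap.range d) = (CircAux.incM G).rank := by
    rw [hd, CircAux.div_toChain G]
    rfl
  have hMlap : (G.lapMatrix ℝ).rank = (CircAux.incM G).rank := by
    rw [← CircAux2.incM_mul_transpose G, Matrix.rank_self_mul_transpose]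
  have hlapker : Module.finrank ℝ (LinearMap.ker ((G.lapMatrix ℝ).mulVecLin))
      = Fintype.card G.ConnectedComponent := by
    have h2 : Matrix.toLin' (G.lapMatrix ℝ) = (G.lapMatrix ℝ).mulVecLin :=
      LinearMap.ext fun v => by rw [Matrix.toLin'_apply, Matrix.mulVecLin_apply]
    rw [← h2, ← SimpleGraph.card_connectedComponent_eq_finrank_ker_toLin'_lapMatrix]
  have hlap : (G.lapMatrix ℝ).rank + Fintype.card G.ConnectedComponent
      = Fintype.card V := by
    have h3 := LinearMap.finrank_range_add_finrank_ker ((G.lapMatrix ℝ).mulVecLin)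
    rw [hlapker, Module.finrank_pi] at h3
    exact h3
  have hcard := CircAux2.card_OEdge G
  have hnat : Nat.card G.ConnectedComponent = Fintype.card G.ConnectedComponent :=
    Nat.card_eq_fintype_card
  rw [hdim1]
  omega
end

section
/- Let G be a finite connected simple graph and T a spanning tree of G. Then a circulation on G is uniquely determined by its values on the edges of G not belonging to T, and these values may be prescribed arbitrarily: the linear map restricting each circulation f on G to the function on ordered pairs (x, y) with {x, y} an edge of G outside T is a linear isomorphism onto the space of antisymmetric real-valued functions supported on the non-tree edges. In particular, the mesh currents associated to the edges closing the spanning tree parametrize all circulations on G. -/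
open Finset

/-- The antisymmetric real-valued functions supported on the edges of `G` that are not
edges of `T` form a real vector subspace of `V → V → ℝ`. -/
def nonTreeSubmodule (V : Type*) (G T : SimpleGraph V) :
    Submodule ℝ (V → V → ℝ) where
  carrier := {g | (∀ x y, g x y = -(g y x)) ∧
      (∀ x y, ¬ (G.Adj x y ∧ ¬ T.Adj x y) → g x y = 0)}
  add_mem' := by
    rintro a b ⟨ha1, ha2⟩ ⟨hb1, hb2⟩
    refine ⟨fun x y => ?_, fun x y h => ?_⟩
    · simp only [Pi.add_apply]
      rw [ha1 x y, hb1 x y]; ring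
    · simp only [Pi.add_apply]
      rw [ha2 x y h, hb2 x y h]; ring
  zero_mem' := ⟨fun x y => by simp, fun x y _ => rfl⟩
  smul_mem' := by
    rintro c a ⟨ha1, ha2⟩
    refine ⟨fun x y => ?_, fun x y h => ?_⟩
    · simp only [Pi.smul_apply, smul_eq_mul]
      rw [ha1 x y]; ring
    · simp only [Pi.smul_apply, smul_eq_mul]
      rw [ha2 x y h]; ring

section AuxFlow

variable {V : Type*} [Fintype V] [DecidableEq V]

/-- a unit of flow along the single (ordered) edge `(u, v)`. -/
def unitEdgeFlow (u v : V) : V → V → ℝ :=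
  fun x y => (if x = u ∧ y = v then 1 else 0) - (if x = v ∧ y = u then 1 else 0)

lemma unitEdgeFlow_antisymm (u v x y : V) :
    unitEdgeFlow u v x y = -(unitEdgeFlow u v y x) := by
  unfold unitEdgeFlow
  rw [show (if y = u ∧ x = v then (1:ℝ) else 0) = (if x = v ∧ y = u then (1:ℝ) else 0) from
      if_congr and_comm rfl rfl,
    show (if y = v ∧ x = u then (1:ℝ) else 0) = (if x = u ∧ y = v then (1:ℝ) else 0) from
      if_congr and_comm rfl rfl]
  ring

lemma unitEdgeFlow_support {u v x y : V} (h : unitEdgeFlow u v x y ≠ 0) :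
    (x = u ∧ y = v) ∨ (x = v ∧ y = u) := by
  by_contra hc
  push_neg at hc
  apply h
  unfold unitEdgeFlow
  rw [if_neg, if_neg, sub_zero]
  · rintro ⟨rfl, rfl⟩; exact hc.2 rfl rfl
  · rintro ⟨rfl, rfl⟩; exact hc.1 rfl rfl

lemma unitEdgeFlow_div (u v x : V) :
    ∑ y, unitEdgeFlow u v x y = (if x = u then 1 else 0) - (if x = v then 1 else 0) := by
  unfold unitEdgeFlow
  rw [Finset.sum_sub_distrib]
  congr 1
  · by_cases hxu : x = u <;> simp [hxu, ite_and]
  · by_cases hxv : x = v <;> simp [hxv, ite_and]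

/-- a unit of flow along a walk. -/
def walkFlow {G : SimpleGraph V} : {u v : V} → G.Walk u v → V → V → ℝ
  | _, _, SimpleGraph.Walk.nil => 0
  | u, _, SimpleGraph.Walk.cons (v := w) _ p => unitEdgeFlow u w + walkFlow p

lemma walkFlow_antisymm {G : SimpleGraph V} {u v : V} (p : G.Walk u v) (x y : V) :
    walkFlow p x y = -(walkFlow p y x) := by
  induction p with
  | nil => simp [walkFlow]
  | cons h p ih =>
    simp only [walkFlow, Pi.add_apply]
    rw [unitEdgeFlow_antisymm, ih]
    ring

lemma walkFlow_support {G : SimpleGraph V} {u v : V} (p : G.Walk u v) (x y : V)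
    (h : walkFlow p x y ≠ 0) : G.Adj x y := by
  induction p with
  | nil => simp [walkFlow] at h
  | @cons a b c hadj p ih =>
    simp only [walkFlow, Pi.add_apply] at h
    by_cases h1 : unitEdgeFlow a b x y = 0
    · exact ih (by rw [h1, zero_add] at h; exact h)
    · rcases unitEdgeFlow_support h1 with ⟨rfl, rfl⟩ | ⟨rfl, rfl⟩
      · exact hadj
      · exact hadj.symm

lemma walkFlow_div {G : SimpleGraph V} {u v : V} (p : G.Walk u v) (x : V) :
    ∑ y, walkFlow p x y = (if x = u then 1 else 0) - (if x = v then 1 else 0) := by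
  induction p with
  | nil => simp [walkFlow]
  | cons hadj p ih =>
    simp only [walkFlow, Pi.add_apply]
    rw [Finset.sum_add_distrib, unitEdgeFlow_div, ih]
    ring

end AuxFlow

section Inj

variable {V : Type*} [Fintype V] [DecidableEq V]

lemma circulation_on_acyclic_eq_zero {T : SimpleGraph V} (hac : T.IsAcyclic)
    (f : V → V → ℝ) (hanti : ∀ x y, f x y = -(f y x))
    (hsupp : ∀ x y, ¬ T.Adj x y → f x y = 0)
    (hdiv : ∀ x, ∑ y, f x y = 0) : f = 0 := by
  classical
  funext x y
  simp only [Pi.zero_apply, Pi.ofNat_apply]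
  by_cases hadj : T.Adj x y
  swap
  · exact hsupp x y hadj
  have hbridge := (SimpleGraph.isAcyclic_iff_forall_edge_isBridge.mp hac)
      (T.mem_edgeSet.mpr hadj)
  rw [SimpleGraph.isBridge_iff] at hbridge
  set G' := T \ SimpleGraph.fromEdgeSet {s(x,y)} with hG'
  set S : Finset V := Finset.univ.filter (fun v => G'.Reachable x v) with hS
  have hxS : x ∈ S := by
    simp only [hS, Finset.mem_filter, Finset.mem_univ, true_and]
    exact SimpleGraph.Reachable.refl x
  have hyS : y ∉ S := by
    have hb : ¬ G'.Reachable x y := hbridge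
    simpa [hS] using hb
  have hG'adj : ∀ a b, T.Adj a b → s(a,b) ≠ s(x,y) → G'.Adj a b := by
    intro a b hab hne
    rw [hG', SimpleGraph.sdiff_adj, SimpleGraph.fromEdgeSet_adj]
    refine ⟨hab, fun h => hne (by simpa using h.1)⟩
  have hclosed : ∀ a ∈ S, ∀ b, f a b ≠ 0 → (a = x ∧ b = y) ∨ b ∈ S := by
    intro a ha b hfb
    have hab : T.Adj a b := by by_contra h; exact hfb (hsupp a b h)
    by_cases hne : s(a,b) = s(x,y)
    · rw [Sym2.eq_iff] at hne
      rcases hne with h | ⟨rfl, rfl⟩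
      · exact Or.inl h
      · exact absurd ha hyS
    · right
      have hG'ab : G'.Adj a b := hG'adj a b hab hne
      have hxa : G'.Reachable x a := by simpa [hS] using ha
      have hxb : G'.Reachable x b := hxa.trans hG'ab.reachable
      simp [hS, hxb]
  have hsum0 : ∑ a ∈ S, ∑ b, f a b = 0 := Finset.sum_eq_zero (fun a _ => hdiv a)
  have hSS : ∑ a ∈ S, ∑ b ∈ S, f a b = 0 := by
    have h1 : ∑ a ∈ S, ∑ b ∈ S, f a b = -∑ a ∈ S, ∑ b ∈ S, f b a := by
      rw [← Finset.sum_neg_distrib]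
      refine Finset.sum_congr rfl (fun a _ => ?_)
      rw [← Finset.sum_neg_distrib]
      exact Finset.sum_congr rfl (fun b _ => hanti a b)
    have h2 : ∑ a ∈ S, ∑ b ∈ S, f b a = ∑ b ∈ S, ∑ a ∈ S, f b a := Finset.sum_comm
    rw [h2] at h1
    linarith
  have hcompl : ∑ a ∈ S, ∑ b ∈ Sᶜ, f a b = 0 := by
    have h2 : ∑ a ∈ S, ((∑ b ∈ S, f a b) + ∑ b ∈ Sᶜ, f a b) = 0 := by
      rw [← hsum0]
      exact Finset.sum_congr rfl (fun a _ => Finset.sum_add_sum_compl S _)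
    rw [Finset.sum_add_distrib, hSS, zero_add] at h2
    exact h2
  have heval : ∑ a ∈ S, ∑ b ∈ Sᶜ, f a b = f x y := by
    have hterm : ∀ a ∈ S, ∀ b ∈ Sᶜ, f a b = if a = x ∧ b = y then f x y else 0 := by
      intro a ha b hb
      by_cases hc : a = x ∧ b = y
      · rw [if_pos hc, hc.1, hc.2]
      · rw [if_neg hc]
        by_contra hfb
        rcases hclosed a ha b hfb with h | h
        · exact hc h
        · exact (Finset.mem_compl.mp hb) h
    rw [Finset.sum_congr rfl (fun a ha => Finset.sum_congr rfl (fun b hb => hterm a ha b hb))]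
    rw [Finset.sum_eq_single_of_mem x hxS]
    · rw [Finset.sum_eq_single_of_mem y (Finset.mem_compl.mpr hyS)]
      · simp
      · intro b _ hby
        rw [if_neg (fun h => hby h.2)]
    · intro a _ hax
      exact Finset.sum_eq_zero (fun b _ => if_neg (fun h => hax h.1))
  rw [heval] at hcompl
  exact hcompl

end Inj


/-- Restriction of a circulation to the non-tree edges, as a linear map. -/
def restrictFlow (V : Type*) [Fintype V] [DecidableEq V] (G T : SimpleGraph V)
    [DecidableRel G.Adj] [DecidableRel T.Adj] :
    circulationSubmodule V G →ₗ[ℝ] nonTreeSubmodule V G T where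
  toFun f := ⟨fun x y => if G.Adj x y ∧ ¬ T.Adj x y then (f : V → V → ℝ) x y else 0, by
    obtain ⟨h1, h2, h3⟩ := f.2
    refine ⟨fun x y => ?_, fun x y h => if_neg h⟩
    beta_reduce
    by_cases h : G.Adj x y ∧ ¬ T.Adj x y
    · rw [if_pos h, if_pos ⟨h.1.symm, fun ht => h.2 ht.symm⟩]
      exact h1 x y
    · rw [if_neg h, if_neg (fun h' => h ⟨h'.1.symm, fun ht => h'.2 ht.symm⟩), neg_zero]⟩
  map_add' a b := by
    apply Subtype.ext
    funext x y
    simp only [Submodule.coe_add, Pi.add_apply]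
    split_ifs <;> simp
  map_smul' c a := by
    apply Subtype.ext
    funext x y
    simp only [Submodule.coe_smul, Pi.smul_apply, smul_eq_mul, RingHom.id_apply]
    split_ifs <;> simp

/-- A circulation on a connected graph `G` is uniquely determined by its (freely
prescribable) values on the edges of `G` outside a spanning tree `T`: the map restricting
a circulation to the non-tree edges is a linear isomorphism onto the space of
antisymmetric functions supported on the non-tree edges.  The mesh currents on the edges
closing the spanning tree thus parametrize all circulations. -/
theorem circulation_restriction_to_nonTree_isomorphism
    {V : Type*} [Fintype V] [DecidableEq V]
    (G T : SimpleGraph V) [DecidableRel G.Adj] [DecidableRel T.Adj]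
    (hG : G.Connected) (hT : IsSpanningTree G T) :
    ∃ e : circulationSubmodule V G ≃ₗ[ℝ] nonTreeSubmodule V G T,
      ∀ (f : circulationSubmodule V G) (x y : V),
        ((e f : V → V → ℝ) x y) =
          (if G.Adj x y ∧ ¬ T.Adj x y then (f : V → V → ℝ) x y else 0) := by
  classical
  obtain ⟨hle, hconn, hac⟩ := hT
  refine ⟨LinearEquiv.ofBijective (restrictFlow V G T) ⟨?_, ?_⟩, fun f x y => rfl⟩
  · -- injectivity
    rw [injective_iff_map_eq_zero]
    intro f hf
    obtain ⟨h1, h2, h3⟩ := f.2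
    have hval : (fun x y => if G.Adj x y ∧ ¬ T.Adj x y then (f : V → V → ℝ) x y else 0)
        = (0 : V → V → ℝ) := congrArg Subtype.val hf
    have hz : ∀ x y, ¬ T.Adj x y → (f : V → V → ℝ) x y = 0 := by
      intro x y hT'
      by_cases hg : G.Adj x y
      · have h0 := congrFun (congrFun hval x) y
        rw [if_pos ⟨hg, hT'⟩] at h0
        exact h0
      · exact h2 x y hg
    exact Subtype.ext (circulation_on_acyclic_eq_zero hac (f : V → V → ℝ) h1 hz h3)
  · -- surjectivity
    intro g
    obtain ⟨hg1, hg2⟩ := g.2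
    have wk : ∀ a b : V, T.Walk a b := fun a b => Classical.choice (hconn.preconnected a b)
    set h : V → V → ℝ :=
      fun x y => 2⁻¹ * ∑ a, ∑ b, (g : V → V → ℝ) a b * walkFlow (wk b a) x y with hh
    have key : ∀ x y, h x y = -(h y x) := by
      intro x y
      have e : ∀ a b : V, (g : V → V → ℝ) a b * walkFlow (wk b a) x y
          = -((g : V → V → ℝ) a b * walkFlow (wk b a) y x) := fun a b => by
        rw [walkFlow_antisymm (wk b a) x y]; ring
      simp only [hh, e, Finset.sum_neg_distrib, mul_neg]
    have hsuppT : ∀ x y, ¬ T.Adj x y → h x y = 0 := by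
      intro x y hxy
      have e : ∀ a b : V, (g : V → V → ℝ) a b * walkFlow (wk b a) x y = 0 := fun a b => by
        by_cases hw : walkFlow (wk b a) x y = 0
        · rw [hw, mul_zero]
        · exact absurd (walkFlow_support _ x y hw) hxy
      simp only [hh, e, Finset.sum_const_zero, mul_zero]
    have hdivh : ∀ x, ∑ y, h x y = -∑ y, (g : V → V → ℝ) x y := by
      intro x
      calc ∑ y, h x y
          = 2⁻¹ * ∑ y, ∑ a, ∑ b, (g : V → V → ℝ) a b * walkFlow (wk b a) x y := by
            rw [hh, ← Finset.mul_sum]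
        _ = 2⁻¹ * ∑ a, ∑ b, ∑ y, (g : V → V → ℝ) a b * walkFlow (wk b a) x y := by
            congr 1
            rw [Finset.sum_comm]
            exact Finset.sum_congr rfl (fun a _ => Finset.sum_comm)
        _ = 2⁻¹ * ∑ a, ∑ b, (g : V → V → ℝ) a b *
              ((if x = b then 1 else 0) - (if x = a then 1 else 0)) := by
            refine congrArg _ (Finset.sum_congr rfl fun a _ =>
              Finset.sum_congr rfl fun b _ => ?_)
            rw [← Finset.mul_sum, walkFlow_div]
        _ = 2⁻¹ * ((∑ a, (g : V → V → ℝ) a x) - (∑ b, (g : V → V → ℝ) x b)) := by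
            congr 1
            simp only [mul_sub, Finset.sum_sub_distrib]
            congr 1
            · refine Finset.sum_congr rfl fun a _ => ?_
              simp [mul_ite, mul_one, mul_zero, Finset.sum_ite_eq]
            · have e2 : ∀ a : V, ∑ b, (g : V → V → ℝ) a b * (if x = a then 1 else 0)
                  = if x = a then ∑ b, (g : V → V → ℝ) a b else 0 := fun a => by
                split_ifs with hxa <;> simp
              simp only [e2]
              rw [Finset.sum_ite_eq]
              simp
        _ = -∑ y, (g : V → V → ℝ) x y := by
            have e3 : ∑ a, (g : V → V → ℝ) a x = -∑ a, (g : V → V → ℝ) x a := by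
              rw [← Finset.sum_neg_distrib]
              exact Finset.sum_congr rfl fun a _ => hg1 a x
            rw [e3]; ring
    have hmem : (fun x y => (g : V → V → ℝ) x y + h x y) ∈ circulationSubmodule V G := by
      refine ⟨fun x y => ?_, fun x y hxy => ?_, fun x => ?_⟩ <;> beta_reduce
      · rw [hg1 x y, key x y]; ring
      · rw [hg2 x y (fun hc => hxy hc.1), hsuppT x y (fun hc => hxy (hle hc)), add_zero]
      · rw [Finset.sum_add_distrib, hdivh x]; ring
    refine ⟨⟨_, hmem⟩, ?_⟩
    apply Subtype.ext
    funext x y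
    show (if G.Adj x y ∧ ¬ T.Adj x y then (g : V → V → ℝ) x y + h x y else 0)
        = (g : V → V → ℝ) x y
    by_cases hc : G.Adj x y ∧ ¬ T.Adj x y
    · rw [if_pos hc, hsuppT x y hc.2, add_zero]
    · rw [if_neg hc, hg2 x y hc]
end
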